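/- arXiv:1302.4235 — 4 statements merged into one kernel-verified Lean document; each statement's English description precedes it below -/
import Mathlib

section
/- Let K be a field and f = ∑_{n≥0} f_n x^n a formal power series over K with f_0 = 1. Then the following are equivalent: (i) the Hankel determinants d(n) = det(f_{i+j})_{i,j=0}^{n} and d_1(n) = det(f_{i+j+1})_{i,j=0}^{n} are nonzero for every n ≥ 0; (ii) f has an S-fraction representation f = 1/(1 − a_0 x/(1 − a_1 x/(1 − ⋯))) with all a_k ≠ 0, i.e. there exist a sequence (a_k)_{k≥0} of nonzero elements of K and a sequence of formal power series (F^{(k)})_{k≥0} with F^{(0)} = f and F^{(k)} · (1 − a_k x F^{(k+1)}) = 1 for all k ≥ 0. Moreover, in that case the coefficients are uniquely determined by a_0 a_2 ⋯ a_{2n} = d_1(n)/d(n) and a_1 a_3 ⋯ a_{2n−1} = d(n)/d_1(n−1). -/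
open Finset PowerSeries

namespace SFracAux

variable {K : Type*} [Field K]

/-- Hankel determinant of the sequence `f` shifted by `c`, of size `n+1`. -/
def hk (f : ℕ → K) (c n : ℕ) : K :=
  Matrix.det (Matrix.of fun i j : Fin (n + 1) => f ((i : ℕ) + (j : ℕ) + c))

section Core

variable (u f : ℕ → K)
variable (hconv : ∀ m, ∑ s ∈ range (m + 1), u s * f (m - s) = if m = 0 then 1 else 0)

include hconv in
lemma headtail (p q : ℕ) :
    ∑ s ∈ range (p + 1), u s * f (p + q + 1 - s)
      = - ∑ t ∈ range (q + 1), u (p + 1 + t) * f (q - t) := by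
  have h1 : ∑ t ∈ Ico (p + 1) (p + q + 1 + 1), u t * f (p + q + 1 - t)
      = ∑ t ∈ range (q + 1), u (p + 1 + t) * f (q - t) := by
    rw [Finset.sum_Ico_eq_sum_range]
    have hq : p + q + 1 + 1 - (p + 1) = q + 1 := by omega
    rw [hq]
    refine Finset.sum_congr rfl fun t ht => ?_
    have e1 : p + q + 1 - (p + 1 + t) = q - t := by omega
    rw [e1]
  have h2 : (∑ s ∈ range (p + 1), u s * f (p + q + 1 - s))
      + ∑ t ∈ Ico (p + 1) (p + q + 1 + 1), u t * f (p + q + 1 - t)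
      = ∑ s ∈ range (p + q + 1 + 1), u s * f (p + q + 1 - s) :=
    Finset.sum_range_add_sum_Ico (fun s => u s * f (p + q + 1 - s))
      (by omega : p + 1 ≤ p + q + 1 + 1)
  have h3 := hconv (p + q + 1)
  rw [if_neg (by omega)] at h3
  rw [h1] at h2
  rw [h3] at h2
  linear_combination h2

lemma finsum_trunc {M : Type*} [AddCommMonoid M] {n : ℕ} (i : Fin (n + 1)) (g : ℕ → M) :
    (∑ k : Fin (n + 1), if (k : ℕ) ≤ (i : ℕ) then g k else 0)
      = ∑ k ∈ range ((i : ℕ) + 1), g k := by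
  have h0 : (∑ k : Fin (n + 1), if (k : ℕ) ≤ (i : ℕ) then g k else 0)
      = ∑ k ∈ range (n + 1), if k ≤ (i : ℕ) then g k else 0 :=
    Fin.sum_univ_eq_sum_range (fun k => if k ≤ (i : ℕ) then g k else 0) (n + 1)
  rw [h0]
  rw [← Finset.sum_subset (Finset.range_subset_range.2 (by omega : (i : ℕ) + 1 ≤ n + 1))
    (fun k _ hk2 => if_neg (by simp only [mem_range] at hk2 ⊢; omega))]
  exact Finset.sum_congr rfl fun k hk => if_pos (by simp only [mem_range] at hk; omega)

lemma head_eq (n : ℕ) (i : Fin (n + 1)) (m : ℕ) :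
    (∑ k : Fin (n + 1), (if (k : ℕ) ≤ (i : ℕ) then u ((i : ℕ) - (k : ℕ)) else 0) * f ((k : ℕ) + m))
      = ∑ s ∈ range ((i : ℕ) + 1), u s * f ((i : ℕ) + m - s) := by
  have h1 : (∑ k : Fin (n + 1), (if (k : ℕ) ≤ (i : ℕ) then u ((i : ℕ) - (k : ℕ)) else 0) * f ((k : ℕ) + m))
      = ∑ k : Fin (n + 1), if (k : ℕ) ≤ (i : ℕ) then u ((i : ℕ) - (k : ℕ)) * f ((k : ℕ) + m) else 0 := by
    refine Finset.sum_congr rfl fun k _ => ?_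
    by_cases h : (k : ℕ) ≤ (i : ℕ)
    · rw [if_pos h, if_pos h]
    · rw [if_neg h, if_neg h, zero_mul]
  have h2 : (∑ k : Fin (n + 1), if (k : ℕ) ≤ (i : ℕ) then u ((i : ℕ) - (k : ℕ)) * f ((k : ℕ) + m) else 0)
      = ∑ k ∈ range ((i : ℕ) + 1), u ((i : ℕ) - k) * f (k + m) :=
    finsum_trunc i (fun k => u ((i : ℕ) - k) * f (k + m))
  have h3 : (∑ s ∈ range ((i : ℕ) + 1), u ((i : ℕ) + 1 - 1 - s) * f ((i : ℕ) + m - ((i : ℕ) + 1 - 1 - s)))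
      = ∑ s ∈ range ((i : ℕ) + 1), u s * f ((i : ℕ) + m - s) :=
    Finset.sum_range_reflect (fun s => u s * f ((i : ℕ) + m - s)) ((i : ℕ) + 1)
  rw [h1, h2, ← h3]
  refine Finset.sum_congr rfl fun k hk => ?_
  simp only [mem_range] at hk
  have e1 : (i : ℕ) + 1 - 1 - k = (i : ℕ) - k := by omega
  have e2 : (i : ℕ) + m - ((i : ℕ) - k) = k + m := by omega
  rw [e1, e2]

lemma lowt_det (v : ℕ → K) (hv : v 0 = 1) (N : ℕ) :
    (Matrix.of fun i j : Fin (N + 1) =>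
      if (j : ℕ) ≤ (i : ℕ) then v ((i : ℕ) - (j : ℕ)) else 0).det = 1 := by
  rw [Matrix.det_of_lowerTriangular _ (by
    intro i j hij
    have hij0 : i < j := OrderDual.toDual_lt_toDual.mp hij
    have hij' : (i : ℕ) < (j : ℕ) := hij0
    exact if_neg (by omega))]
  have hdiag : ∀ i : Fin (N + 1),
      (Matrix.of fun i j : Fin (N + 1) =>
        if (j : ℕ) ≤ (i : ℕ) then v ((i : ℕ) - (j : ℕ)) else 0) i i = 1 := by
    intro i
    show (if (i : ℕ) ≤ (i : ℕ) then v ((i : ℕ) - (i : ℕ)) else 0) = 1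
    rw [if_pos le_rfl, Nat.sub_self, hv]
  rw [Finset.prod_congr rfl (fun i _ => hdiag i), Finset.prod_const_one]

lemma upt_det (v : ℕ → K) (hv : v 0 = 1) (N : ℕ) :
    (Matrix.of fun i j : Fin (N + 1) =>
      if (i : ℕ) ≤ (j : ℕ) then v ((j : ℕ) - (i : ℕ)) else 0).det = 1 := by
  rw [Matrix.det_of_upperTriangular (by
    intro i j hij
    have hij0 : j < i := hij
    have hij' : (j : ℕ) < (i : ℕ) := hij0
    exact if_neg (by omega))]
  have hdiag : ∀ i : Fin (N + 1),
      (Matrix.of fun i j : Fin (N + 1) =>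
        if (i : ℕ) ≤ (j : ℕ) then v ((j : ℕ) - (i : ℕ)) else 0) i i = 1 := by
    intro i
    show (if (i : ℕ) ≤ (i : ℕ) then v ((i : ℕ) - (i : ℕ)) else 0) = 1
    rw [if_pos le_rfl, Nat.sub_self, hv]
  rw [Finset.prod_congr rfl (fun i _ => hdiag i), Finset.prod_const_one]

include hconv in
lemma core_b (hu0 : u 0 = 1) (hf0 : f 0 = 1) (n : ℕ) :
    hk f 1 n = (-1) ^ (n + 1) * hk u 1 n := by
  classical
  set U : Matrix (Fin (n + 1)) (Fin (n + 1)) K :=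
    Matrix.of fun i j => if (j : ℕ) ≤ (i : ℕ) then u ((i : ℕ) - (j : ℕ)) else 0 with hU
  set Ft : Matrix (Fin (n + 1)) (Fin (n + 1)) K :=
    Matrix.of fun i j => if (i : ℕ) ≤ (j : ℕ) then f ((j : ℕ) - (i : ℕ)) else 0 with hFt
  set Mf : Matrix (Fin (n + 1)) (Fin (n + 1)) K :=
    Matrix.of fun i j => f ((i : ℕ) + (j : ℕ) + 1) with hMf
  set Mu : Matrix (Fin (n + 1)) (Fin (n + 1)) K :=
    Matrix.of fun i j => u ((i : ℕ) + (j : ℕ) + 1) with hMu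
  have hmain : U * Mf = -(Mu * Ft) := by
    ext i j
    rw [Matrix.mul_apply, Matrix.neg_apply, Matrix.mul_apply]
    have hL : ∑ k : Fin (n + 1), U i k * Mf k j
        = ∑ s ∈ range ((i : ℕ) + 1), u s * f ((i : ℕ) + ((j : ℕ) + 1) - s) := by
      rw [← head_eq u f n i ((j : ℕ) + 1)]
      refine Finset.sum_congr rfl fun k _ => ?_
      simp only [hU, hMf, Matrix.of_apply]
      have e1 : (k : ℕ) + (j : ℕ) + 1 = (k : ℕ) + ((j : ℕ) + 1) := by omega
      rw [e1]
    have hR : ∑ k : Fin (n + 1), Mu i k * Ft k j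
        = ∑ t ∈ range ((j : ℕ) + 1), u ((i : ℕ) + 1 + t) * f ((j : ℕ) - t) := by
      have h1 : ∑ k : Fin (n + 1), Mu i k * Ft k j
          = ∑ k : Fin (n + 1), if (k : ℕ) ≤ (j : ℕ)
              then u ((i : ℕ) + (k : ℕ) + 1) * f ((j : ℕ) - (k : ℕ)) else 0 := by
        refine Finset.sum_congr rfl fun k _ => ?_
        simp only [hMu, hFt, Matrix.of_apply]
        by_cases h : (k : ℕ) ≤ (j : ℕ)
        · rw [if_pos h, if_pos h]
        · rw [if_neg h, if_neg h, mul_zero]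
      have h2 : (∑ k : Fin (n + 1), if (k : ℕ) ≤ (j : ℕ)
              then u ((i : ℕ) + (k : ℕ) + 1) * f ((j : ℕ) - (k : ℕ)) else 0)
          = ∑ k ∈ range ((j : ℕ) + 1), u ((i : ℕ) + k + 1) * f ((j : ℕ) - k) :=
        finsum_trunc j (fun k => u ((i : ℕ) + k + 1) * f ((j : ℕ) - k))
      rw [h1, h2]
      refine Finset.sum_congr rfl fun t _ => ?_
      have e1 : (i : ℕ) + t + 1 = (i : ℕ) + 1 + t := by omega
      rw [e1]
    rw [hL, hR]
    have hht := headtail u f hconv (i : ℕ) (j : ℕ)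
    have e1 : (i : ℕ) + (j : ℕ) + 1 = (i : ℕ) + ((j : ℕ) + 1) := by omega
    rw [e1] at hht
    exact hht
  have hdetU : U.det = 1 := lowt_det u hu0 n
  have hdetFt : Ft.det = 1 := upt_det f hf0 n
  have hdet := congrArg Matrix.det hmain
  rw [Matrix.det_mul, hdetU, one_mul, Matrix.det_neg, Matrix.det_mul, hdetFt, mul_one,
    Fintype.card_fin] at hdet
  exact hdet

include hconv in
lemma core_a (hu0 : u 0 = 1) (hf0 : f 0 = 1) (n : ℕ) :
    hk f 0 (n + 1) = (-1) ^ (n + 1) * hk u 2 n := by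
  classical
  set U : Matrix (Fin (n + 2)) (Fin (n + 2)) K :=
    Matrix.of fun i j => if (j : ℕ) ≤ (i : ℕ) then u ((i : ℕ) - (j : ℕ)) else 0 with hU
  set Af : Matrix (Fin (n + 2)) (Fin (n + 2)) K :=
    Matrix.of fun i j => f ((i : ℕ) + (j : ℕ) + 0) with hAf
  have hdetU : U.det = 1 := lowt_det u hu0 (n + 1)
  have hE : ∀ i j : Fin (n + 2), (U * Af) i j
      = ∑ s ∈ range ((i : ℕ) + 1), u s * f ((i : ℕ) + (j : ℕ) - s) := by
    intro i j
    rw [Matrix.mul_apply, ← head_eq u f (n + 1) i (j : ℕ)]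
    refine Finset.sum_congr rfl fun k _ => ?_
    simp only [hU, hAf, Matrix.of_apply]
    have e1 : (k : ℕ) + (j : ℕ) + 0 = (k : ℕ) + (j : ℕ) := by omega
    rw [e1]
  have hcol0 : ∀ i : Fin (n + 2), (U * Af) i 0 = if i = 0 then 1 else 0 := by
    intro i
    rw [hE i 0]
    have h1 : ∑ s ∈ range ((i : ℕ) + 1), u s * f ((i : ℕ) + ((0 : Fin (n + 2)) : ℕ) - s)
        = ∑ s ∈ range ((i : ℕ) + 1), u s * f ((i : ℕ) - s) := by
      refine Finset.sum_congr rfl fun s _ => ?_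
      have e1 : (i : ℕ) + ((0 : Fin (n + 2)) : ℕ) - s = (i : ℕ) - s := by
        simp only [Fin.val_zero]
        omega
      rw [e1]
    rw [h1, hconv (i : ℕ)]
    by_cases h : i = 0
    · rw [if_pos h, if_pos (by simp [h])]
    · rw [if_neg h, if_neg (fun h' => h (Fin.ext (by rw [h']; rfl)))]
  have hdet1 : (U * Af).det = ((U * Af).submatrix Fin.succ Fin.succ).det := by
    rw [Matrix.det_succ_column_zero]
    rw [Finset.sum_eq_single (0 : Fin (n + 2))]
    · rw [hcol0 0, if_pos rfl]
      simp [Fin.succAbove_zero]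
    · intro i _ hi
      rw [hcol0 i, if_neg hi]
      ring
    · intro h; exact absurd (Finset.mem_univ _) h
  set Mu2 : Matrix (Fin (n + 1)) (Fin (n + 1)) K :=
    Matrix.of fun i j => u ((i : ℕ) + (j : ℕ) + 2) with hMu2
  set T : Matrix (Fin (n + 1)) (Fin (n + 1)) K :=
    Matrix.of fun i j => if (i : ℕ) ≤ (j : ℕ) then f ((j : ℕ) - (i : ℕ)) else 0 with hT
  have hsub : (U * Af).submatrix Fin.succ Fin.succ = -(Mu2 * T) := by
    ext i j
    rw [Matrix.submatrix_apply, hE]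
    have hL : ∑ s ∈ range ((i.succ : ℕ) + 1), u s * f ((i.succ : ℕ) + (j.succ : ℕ) - s)
        = ∑ s ∈ range (((i : ℕ) + 1) + 1), u s * f (((i : ℕ) + 1) + (j : ℕ) + 1 - s) := by
      refine Finset.sum_congr (by simp [Fin.val_succ]) fun s _ => ?_
      have e1 : (i.succ : ℕ) + (j.succ : ℕ) - s = ((i : ℕ) + 1) + (j : ℕ) + 1 - s := by
        simp only [Fin.val_succ]; omega
      rw [e1]
    rw [hL, headtail u f hconv ((i : ℕ) + 1) (j : ℕ)]
    rw [Matrix.neg_apply, Matrix.mul_apply]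
    have h1 : ∑ k : Fin (n + 1), Mu2 i k * T k j
        = ∑ k : Fin (n + 1), if (k : ℕ) ≤ (j : ℕ)
            then u ((i : ℕ) + (k : ℕ) + 2) * f ((j : ℕ) - (k : ℕ)) else 0 := by
      refine Finset.sum_congr rfl fun k _ => ?_
      simp only [hMu2, hT, Matrix.of_apply]
      by_cases h : (k : ℕ) ≤ (j : ℕ)
      · rw [if_pos h, if_pos h]
      · rw [if_neg h, if_neg h, mul_zero]
    have h2 : (∑ k : Fin (n + 1), if (k : ℕ) ≤ (j : ℕ)
            then u ((i : ℕ) + (k : ℕ) + 2) * f ((j : ℕ) - (k : ℕ)) else 0)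
        = ∑ k ∈ range ((j : ℕ) + 1), u ((i : ℕ) + k + 2) * f ((j : ℕ) - k) :=
      finsum_trunc j (fun k => u ((i : ℕ) + k + 2) * f ((j : ℕ) - k))
    rw [h1, h2]
    congr 1
    refine Finset.sum_congr rfl fun t _ => ?_
    have e1 : (i : ℕ) + 1 + 1 + t = (i : ℕ) + t + 2 := by omega
    rw [e1]
  have hdetT : T.det = 1 := upt_det f hf0 n
  calc hk f 0 (n + 1) = Af.det := rfl
    _ = (U * Af).det := by rw [Matrix.det_mul, hdetU, one_mul]
    _ = ((U * Af).submatrix Fin.succ Fin.succ).det := hdet1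
    _ = (-(Mu2 * T)).det := by rw [hsub]
    _ = (-1) ^ (n + 1) * Mu2.det := by
        rw [Matrix.det_neg, Matrix.det_mul, hdetT, mul_one, Fintype.card_fin]
    _ = (-1) ^ (n + 1) * hk u 2 n := rfl

end Core

section PS

/-- coefficient sequence -/
noncomputable def cf (g : PowerSeries K) : ℕ → K := fun m => PowerSeries.coeff (R := K) m g

lemma w_const (a : K) (g' : PowerSeries K) :
    constantCoeff (R := K) (1 - C (R := K) a * X * g') = 1 := by
  simp [constantCoeff_X]

lemma w_succ (a : K) (g' : PowerSeries K) (m : ℕ) :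
    coeff (R := K) (m + 1) (1 - C (R := K) a * X * g') = -(a * coeff (R := K) m g') := by
  rw [map_sub, coeff_one, if_neg (Nat.succ_ne_zero m), mul_assoc, coeff_C_mul,
    coeff_succ_X_mul]
  ring

lemma hconv_of_rel (g w : PowerSeries K) (hrel : g * w = 1) (m : ℕ) :
    ∑ s ∈ range (m + 1), cf w s * cf g (m - s) = if m = 0 then 1 else 0 := by
  have h : coeff (R := K) m (w * g) = coeff (R := K) m 1 := by rw [mul_comm w g, hrel]
  rw [PowerSeries.coeff_mul, Finset.Nat.sum_antidiagonal_eq_sum_range_succ_mk,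
    PowerSeries.coeff_one] at h
  exact h

lemma const_one (g w : PowerSeries K) (hw : constantCoeff (R := K) w = 1) (hrel : g * w = 1) :
    constantCoeff (R := K) g = 1 := by
  have h := congrArg (constantCoeff (R := K)) hrel
  rw [map_mul, hw, mul_one, map_one] at h
  exact h

lemma coeff_one_eq (a : K) (g g' : PowerSeries K) (hg0 : constantCoeff (R := K) g = 1)
    (hrel : g * (1 - C (R := K) a * X * g') = 1) :
    coeff (R := K) 1 g = a * constantCoeff (R := K) g' := by
  have h := congrArg (coeff (R := K) 1) hrel
  rw [PowerSeries.coeff_mul, Finset.Nat.sum_antidiagonal_eq_sum_range_succ_mk,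
    Finset.sum_range_succ, Finset.sum_range_one, PowerSeries.coeff_one] at h
  norm_num at h
  have hx : coeff (R := K) 1 (X * g') = coeff (R := K) 0 g' := by
    simpa using PowerSeries.coeff_succ_X_mul 0 g'
  have hw2 : coeff (R := K) 1 (C (R := K) a * X * g') = a * constantCoeff (R := K) g' := by
    rw [mul_assoc, coeff_C_mul, hx, coeff_zero_eq_constantCoeff_apply]
  rw [hw2, hg0] at h
  linear_combination h

lemma chainrel (a : K) (g g' : PowerSeries K) (hg0 : constantCoeff (R := K) g = 1)
    (hrel : g * (1 - C (R := K) a * X * g') = 1) :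
    (∀ n, hk (cf g) 0 (n + 1) = a ^ (n + 1) * hk (cf g') 1 n)
    ∧ (∀ n, hk (cf g) 1 n = a ^ (n + 1) * hk (cf g') 0 n) := by
  set w : PowerSeries K := 1 - C (R := K) a * X * g' with hw
  have hconv := hconv_of_rel g w hrel
  have hu0 : cf w 0 = 1 := by
    rw [cf, coeff_zero_eq_constantCoeff_apply]
    exact w_const a g'
  have hf0 : cf g 0 = 1 := by
    rw [cf, coeff_zero_eq_constantCoeff_apply]
    exact hg0
  constructor
  · intro n
    rw [core_a (cf w) (cf g) hconv hu0 hf0 n]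
    have hm : (Matrix.of fun i j : Fin (n + 1) => cf w ((i : ℕ) + (j : ℕ) + 2)) =
        (-a) • (Matrix.of fun i j : Fin (n + 1) => cf g' ((i : ℕ) + (j : ℕ) + 1)) := by
      ext i j
      show cf w ((i : ℕ) + (j : ℕ) + 2) = (-a) * cf g' ((i : ℕ) + (j : ℕ) + 1)
      have e : (i : ℕ) + (j : ℕ) + 2 = ((i : ℕ) + (j : ℕ) + 1) + 1 := rfl
      rw [cf, cf, e, w_succ]
      ring
    have h2 : hk (cf w) 2 n = (-a) ^ (n + 1) * hk (cf g') 1 n := by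
      unfold hk
      rw [hm, Matrix.det_smul, Fintype.card_fin]
    rw [h2, ← mul_assoc, ← mul_pow, neg_mul_neg, one_mul]
  · intro n
    rw [core_b (cf w) (cf g) hconv hu0 hf0 n]
    have hm : (Matrix.of fun i j : Fin (n + 1) => cf w ((i : ℕ) + (j : ℕ) + 1)) =
        (-a) • (Matrix.of fun i j : Fin (n + 1) => cf g' ((i : ℕ) + (j : ℕ) + 0)) := by
      ext i j
      show cf w ((i : ℕ) + (j : ℕ) + 1) = (-a) * cf g' ((i : ℕ) + (j : ℕ) + 0)
      have e : (i : ℕ) + (j : ℕ) + 1 = ((i : ℕ) + (j : ℕ) + 0) + 1 := rfl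
      rw [cf, cf, e, w_succ]
      ring
    have h2 : hk (cf w) 1 n = (-a) ^ (n + 1) * hk (cf g') 0 n := by
      unfold hk
      rw [hm, Matrix.det_smul, Fintype.card_fin]
    rw [h2, ← mul_assoc, ← mul_pow, neg_mul_neg, one_mul]

lemma cf_zero_one {g : PowerSeries K} (hg : constantCoeff (R := K) g = 1) : cf g 0 = 1 := by
  rw [cf, coeff_zero_eq_constantCoeff_apply]; exact hg

lemma hk00 (g : PowerSeries K) (hg : constantCoeff (R := K) g = 1) : hk (cf g) 0 0 = 1 := by
  unfold hk
  rw [Matrix.det_fin_one]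
  show cf g (((0 : Fin 1) : ℕ) + ((0 : Fin 1) : ℕ) + 0) = 1
  exact cf_zero_one hg

lemma hk10 (g : PowerSeries K) : hk (cf g) 1 0 = coeff (R := K) 1 g := by
  unfold hk
  rw [Matrix.det_fin_one]
  rfl

lemma prod_nza (a : ℕ → K) (ha : ∀ k, a k ≠ 0) (s : Finset ℕ) (b : ℕ → ℕ) :
    ∏ j ∈ s, a (b j) ≠ 0 :=
  Finset.prod_ne_zero_iff.mpr fun j _ => ha (b j)

lemma forward (a : ℕ → K) (F : ℕ → PowerSeries K) (ha : ∀ k, a k ≠ 0)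
    (hrec : ∀ k, F k * (1 - C (R := K) (a k) * X * F (k + 1)) = 1) :
    ∀ n k, hk (cf (F k)) 0 n ≠ 0 ∧ hk (cf (F k)) 1 n ≠ 0 ∧
      hk (cf (F k)) 1 n = hk (cf (F k)) 0 n * ∏ j ∈ range (n + 1), a (k + 2 * j) ∧
      hk (cf (F k)) 0 (n + 1) = hk (cf (F k)) 1 n * ∏ j ∈ range (n + 1), a (k + 2 * j + 1) := by
  have hg0 : ∀ k, constantCoeff (R := K) (F k) = 1 :=
    fun k => const_one _ _ (w_const (a k) (F (k + 1))) (hrec k)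
  have hcr := fun k => chainrel (a k) (F k) (F (k + 1)) (hg0 k) (hrec k)
  have ha1 : ∀ k, coeff (R := K) 1 (F k) = a k := by
    intro k
    rw [coeff_one_eq (a k) (F k) (F (k + 1)) (hg0 k) (hrec k), hg0 (k + 1), mul_one]
  have hD0 : ∀ k, hk (cf (F k)) 0 0 = 1 := fun k => hk00 _ (hg0 k)
  have hD10 : ∀ k, hk (cf (F k)) 1 0 = a k := fun k => by rw [hk10, ha1]
  intro n
  induction n with
  | zero =>
    intro k
    refine ⟨?_, ?_, ?_, ?_⟩
    · rw [hD0 k]; exact one_ne_zero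
    · rw [hD10 k]; exact ha k
    · rw [hD10 k, hD0 k, one_mul, Finset.prod_range_one]
      norm_num
    · rw [(hcr k).1 0, hD10 k, hD10 (k + 1), Finset.prod_range_one]
      norm_num
  | succ n IH =>
    have third : ∀ k, hk (cf (F k)) 1 (n + 1)
        = hk (cf (F k)) 0 (n + 1) * ∏ j ∈ range (n + 2), a (k + 2 * j) := by
      intro k
      rw [(hcr k).2 (n + 1), (IH (k + 1)).2.2.2, (hcr k).1 n]
      have hp : ∏ j ∈ range (n + 2), a (k + 2 * j)
          = (∏ j ∈ range (n + 1), a (k + 1 + 2 * j + 1)) * a k := by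
        rw [Finset.prod_range_succ' (fun j => a (k + 2 * j)) (n + 1)]
        congr 1
        refine Finset.prod_congr rfl fun j _ => ?_
        congr 1
        omega
      rw [hp]
      ring
    intro k
    refine ⟨?_, ?_, third k, ?_⟩
    · rw [(hcr k).1 n]
      exact mul_ne_zero (pow_ne_zero _ (ha k)) (IH (k + 1)).2.1
    · rw [(hcr k).2 (n + 1), (IH (k + 1)).2.2.2]
      exact mul_ne_zero (pow_ne_zero _ (ha k))
        (mul_ne_zero (IH (k + 1)).2.1 (prod_nza a ha _ _))
    · rw [(hcr k).1 (n + 1), third (k + 1), (hcr k).2 (n + 1)]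
      have hp : ∏ j ∈ range (n + 2), a (k + 1 + 2 * j)
          = ∏ j ∈ range (n + 2), a (k + 2 * j + 1) := by
        refine Finset.prod_congr rfl fun j _ => ?_
        congr 1
        omega
      rw [hp]
      ring

noncomputable def stp (g : PowerSeries K) : PowerSeries K :=
  PowerSeries.mk fun m => (coeff (R := K) 1 g)⁻¹ * -(coeff (R := K) (m + 1) g⁻¹)

lemma stp_rel (g : PowerSeries K) (hg0 : constantCoeff (R := K) g = 1) (hg1 : coeff (R := K) 1 g ≠ 0) :
    g * (1 - C (R := K) (coeff (R := K) 1 g) * X * stp g) = 1 := by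
  have hinv : 1 - C (R := K) (coeff (R := K) 1 g) * X * stp g = g⁻¹ := by
    ext m
    cases m with
    | zero =>
      rw [coeff_zero_eq_constantCoeff_apply, coeff_zero_eq_constantCoeff_apply,
        w_const, PowerSeries.constantCoeff_inv, hg0, inv_one]
    | succ m =>
      rw [w_succ, stp, PowerSeries.coeff_mk]
      field_simp
  rw [hinv]
  exact PowerSeries.mul_inv_cancel g (by rw [hg0]; exact one_ne_zero)

lemma stp_inv (g : PowerSeries K) (hg0 : constantCoeff (R := K) g = 1)
    (hH : ∀ n, hk (cf g) 0 n ≠ 0 ∧ hk (cf g) 1 n ≠ 0) :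
    constantCoeff (R := K) (stp g) = 1 ∧ coeff (R := K) 1 g ≠ 0 ∧
      g * (1 - C (R := K) (coeff (R := K) 1 g) * X * stp g) = 1 ∧
      (∀ n, hk (cf (stp g)) 0 n ≠ 0 ∧ hk (cf (stp g)) 1 n ≠ 0) := by
  have hg1 : coeff (R := K) 1 g ≠ 0 := by
    have h := (hH 0).2
    rwa [hk10] at h
  have hrel := stp_rel g hg0 hg1
  have hc0 : constantCoeff (R := K) (stp g) = 1 := by
    have h := coeff_one_eq (coeff (R := K) 1 g) g (stp g) hg0 hrel
    have h2 : coeff (R := K) 1 g * constantCoeff (R := K) (stp g) = coeff (R := K) 1 g * 1 := by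
      rw [mul_one]; exact h.symm
    exact mul_left_cancel₀ hg1 h2
  refine ⟨hc0, hg1, hrel, fun n => ?_⟩
  have hcr := chainrel (coeff (R := K) 1 g) g (stp g) hg0 hrel
  constructor
  · have h := (hH n).2
    rw [hcr.2 n] at h
    exact right_ne_zero_of_mul h
  · have h := (hH (n + 1)).1
    rw [hcr.1 n] at h
    exact right_ne_zero_of_mul h

noncomputable def chain (f : PowerSeries K) : ℕ → PowerSeries K
  | 0 => f
  | k + 1 => stp (chain f k)

lemma reverse (f : PowerSeries K) (hf0 : PowerSeries.coeff (R := K) 0 f = 1)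
    (hH : ∀ n, hk (cf f) 0 n ≠ 0 ∧ hk (cf f) 1 n ≠ 0) :
    ∃ (a : ℕ → K) (F : ℕ → PowerSeries K), (∀ k, a k ≠ 0) ∧ F 0 = f ∧
      ∀ k, F k * (1 - C (R := K) (a k) * X * F (k + 1)) = 1 := by
  have hinv : ∀ k, constantCoeff (R := K) (chain f k) = 1 ∧
      (∀ n, hk (cf (chain f k)) 0 n ≠ 0 ∧ hk (cf (chain f k)) 1 n ≠ 0) := by
    intro k
    induction k with
    | zero =>
      exact ⟨by rw [← coeff_zero_eq_constantCoeff_apply]; exact hf0, hH⟩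
    | succ k IH =>
      obtain ⟨h1, h2⟩ := IH
      have h := stp_inv _ h1 h2
      exact ⟨h.1, h.2.2.2⟩
  refine ⟨fun k => coeff (R := K) 1 (chain f k), chain f, ?_, rfl, ?_⟩
  · intro k
    exact (stp_inv _ (hinv k).1 (hinv k).2).2.1
  · intro k
    exact (stp_inv _ (hinv k).1 (hinv k).2).2.2.1

end PS

end SFracAux

/-- Corollary 3.1: a power series `f` with `f₀ = 1` has an S-fraction representation
`f = 1/(1 − a₀x/(1 − a₁x/(1 − ⋯)))` with all `a_k ≠ 0` if and only if all Hankel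
determinants `d(n) = det(f_{i+j})ⁿ` and `d₁(n) = det(f_{i+j+1})ⁿ` are nonzero; moreover,
in that case the coefficients are determined by `a₀a₂⋯a_{2n} = d₁(n)/d(n)` and
`a₁a₃⋯a_{2n−1} = d(n)/d₁(n−1)`. -/
theorem sFrac_iff_hankel_nonzero {K : Type*} [Field K] (f : PowerSeries K)
    (hf0 : PowerSeries.coeff (R := K) 0 f = 1) :
    ((∀ n : ℕ,
        Matrix.det (Matrix.of fun i j : Fin (n + 1) =>
          PowerSeries.coeff (R := K) ((i : ℕ) + (j : ℕ)) f) ≠ 0 ∧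
        Matrix.det (Matrix.of fun i j : Fin (n + 1) =>
          PowerSeries.coeff (R := K) ((i : ℕ) + (j : ℕ) + 1) f) ≠ 0) ↔
      (∃ (a : ℕ → K) (F : ℕ → PowerSeries K), (∀ k : ℕ, a k ≠ 0) ∧ F 0 = f ∧
        ∀ k : ℕ, F k * (1 - PowerSeries.C (R := K) (a k) * PowerSeries.X * F (k + 1)) = 1)) ∧
    (∀ (a : ℕ → K) (F : ℕ → PowerSeries K), (∀ k : ℕ, a k ≠ 0) → F 0 = f →
      (∀ k : ℕ, F k * (1 - PowerSeries.C (R := K) (a k) * PowerSeries.X * F (k + 1)) = 1) →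
      (∀ n : ℕ,
        ∏ j ∈ Finset.range (n + 1), a (2 * j) =
          Matrix.det (Matrix.of fun i j : Fin (n + 1) =>
              PowerSeries.coeff (R := K) ((i : ℕ) + (j : ℕ) + 1) f) /
            Matrix.det (Matrix.of fun i j : Fin (n + 1) =>
              PowerSeries.coeff (R := K) ((i : ℕ) + (j : ℕ)) f)) ∧
      (∀ n : ℕ, 1 ≤ n →
        ∏ j ∈ Finset.range n, a (2 * j + 1) =
          Matrix.det (Matrix.of fun i j : Fin (n + 1) =>
              PowerSeries.coeff (R := K) ((i : ℕ) + (j : ℕ)) f) /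
            Matrix.det (Matrix.of fun i j : Fin n =>
              PowerSeries.coeff (R := K) ((i : ℕ) + (j : ℕ) + 1) f))) := by
  have hid0 : ∀ n : ℕ, SFracAux.hk (SFracAux.cf f) 0 n
      = Matrix.det (Matrix.of fun i j : Fin (n + 1) =>
          PowerSeries.coeff (R := K) ((i : ℕ) + (j : ℕ)) f) := fun n => rfl
  have hid1 : ∀ n : ℕ, SFracAux.hk (SFracAux.cf f) 1 n
      = Matrix.det (Matrix.of fun i j : Fin (n + 1) =>
          PowerSeries.coeff (R := K) ((i : ℕ) + (j : ℕ) + 1) f) := fun n => rfl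
  constructor
  · constructor
    · intro hH
      exact SFracAux.reverse f hf0 fun n => by
        rw [hid0 n, hid1 n]; exact hH n
    · rintro ⟨a, F, ha, hF0, hrec⟩ n
      obtain ⟨h1, h2, -, -⟩ := SFracAux.forward a F ha hrec n 0
      rw [hF0] at h1 h2
      rw [← hid0 n, ← hid1 n]
      exact ⟨h1, h2⟩
  · intro a F ha hF0 hrec
    constructor
    · intro n
      obtain ⟨h1, -, h3, -⟩ := SFracAux.forward a F ha hrec n 0
      rw [hF0] at h1 h3
      rw [← hid0 n, ← hid1 n, eq_div_iff h1, h3, mul_comm]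
      congr 1
      refine Finset.prod_congr rfl fun j _ => ?_
      congr 1
      omega
    · intro n hn
      obtain ⟨m, rfl⟩ : ∃ m, n = m + 1 := ⟨n - 1, by omega⟩
      obtain ⟨-, h2, -, h4⟩ := SFracAux.forward a F ha hrec m 0
      rw [hF0] at h2 h4
      rw [← hid0 (m + 1), ← hid1 m, eq_div_iff h2, h4, mul_comm]
      congr 1
      refine Finset.prod_congr rfl fun j _ => ?_
      congr 1
      omega
end

section
/- Let K be a field, (a_k)_{k≥0} a sequence in K, and m ≥ 1 an integer. For each m define polynomials P^{(m)}_k(x) over K by P^{(m)}_0 = 1, P^{(m)}_1 = x, P^{(m)}_{2k}(x) = x^{m−1} P^{(m)}_{2k−1}(x) − a_{2k−2} P^{(m)}_{2k−2}(x) and P^{(m)}_{2k+1}(x) = x P^{(m)}_{2k}(x) − a_{2k−1} P^{(m)}_{2k−1}(x) for k ≥ 1. Write P^{(2)}_{2k}(x) = ∑_{j=0}^{k} u_{k,j} x^{2j} and P^{(2)}_{2k−1}(x) = x ∑_{j=0}^{k−1} v_{k,j} x^{2j}. Then for every m ≥ 1 and k, P^{(m)}_{2k}(x) = ∑_{j=0}^{k}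 u_{k,j} x^{mj} and P^{(m)}_{2k−1}(x) = x ∑_{j=0}^{k−1} v_{k,j} x^{mj}. -/
private lemma coeff_sum_even' {K : Type*} [Semiring K] (w : ℕ → K) (n i : ℕ) (hi : i < n) :
    (∑ j ∈ Finset.range n, Polynomial.C (w j) * Polynomial.X ^ (2 * j)).coeff (2 * i) = w i := by
  rw [Polynomial.finset_sum_coeff, Finset.sum_eq_single i]
  · rw [Polynomial.coeff_C_mul, Polynomial.coeff_X_pow, if_pos rfl, mul_one]
  · intro j _ hj
    rw [Polynomial.coeff_C_mul, Polynomial.coeff_X_pow, if_neg (by omega), mul_zero]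
  · intro h; exact absurd (Finset.mem_range.2 hi) h

/-- Proposition 3.1: the polynomials `P^{(m)}_k` associated to the C-fraction with all
exponents `m` are obtained from the `m = 2` case by replacing `x^{2j}` with `x^{mj}`
(even index) resp. `x^{1+2j}` with `x^{1+mj}` (odd index). -/
theorem cFrac_polynomials_exponent_substitution {K : Type*} [Field K] (a : ℕ → K)
    (P : ℕ → ℕ → Polynomial K)
    (hP0 : ∀ m : ℕ, P m 0 = 1) (hP1 : ∀ m : ℕ, P m 1 = Polynomial.X)
    (hPeven : ∀ m k : ℕ, P m (2 * k + 2) =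
      Polynomial.X ^ (m - 1) * P m (2 * k + 1) - Polynomial.C (a (2 * k)) * P m (2 * k))
    (hPodd : ∀ m k : ℕ, P m (2 * k + 3) =
      Polynomial.X * P m (2 * k + 2) - Polynomial.C (a (2 * k + 1)) * P m (2 * k + 1)) :
    ∀ m : ℕ, 1 ≤ m → ∀ k : ℕ,
      P m (2 * k) = ∑ j ∈ Finset.range (k + 1),
        Polynomial.C ((P 2 (2 * k)).coeff (2 * j)) * Polynomial.X ^ (m * j) ∧
      P m (2 * k + 1) = Polynomial.X * ∑ j ∈ Finset.range (k + 1),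
        Polynomial.C ((P 2 (2 * k + 1)).coeff (2 * j + 1)) * Polynomial.X ^ (m * j) := by
  suffices H : ∀ k : ℕ, ∀ m : ℕ, 1 ≤ m →
      (P m (2 * k) = ∑ j ∈ Finset.range (k + 1),
        Polynomial.C ((P 2 (2 * k)).coeff (2 * j)) * Polynomial.X ^ (m * j) ∧
      P m (2 * k + 1) = Polynomial.X * ∑ j ∈ Finset.range (k + 1),
        Polynomial.C ((P 2 (2 * k + 1)).coeff (2 * j + 1)) * Polynomial.X ^ (m * j)) by
    intro m hm k; exact H k m hm
  intro k
  induction k with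
  | zero =>
    intro m hm
    constructor
    · simp [hP0]
    · simp [hP1]
  | succ k ih =>
    intro m hm
    have h2 : (1 : ℕ) ≤ 2 := by norm_num
    set v : ℕ → K := fun j => (P 2 (2 * k + 1)).coeff (2 * j + 1) with hv
    set u : ℕ → K := fun j => (P 2 (2 * k)).coeff (2 * j) with hu
    set w : ℕ → K := fun j =>
      (if j = 0 then 0 else v (j - 1)) - a (2 * k) * (if j < k + 1 then u j else 0) with hwdef
    -- Key even identity with the auxiliary coefficients `w`.
    have key : ∀ m : ℕ, 1 ≤ m → P m (2 * k + 2) =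
        ∑ j ∈ Finset.range (k + 2), Polynomial.C (w j) * Polynomial.X ^ (m * j) := by
      intro m hm
      have hX : (Polynomial.X : Polynomial K) ^ (m - 1) * Polynomial.X = Polynomial.X ^ m := by
        rw [← pow_succ]; congr 1; omega
      rw [hPeven m k, (ih m hm).2, (ih m hm).1, ← mul_assoc, hX]
      simp only [hwdef, map_sub, map_mul, sub_mul, Finset.sum_sub_distrib, Finset.mul_sum]
      congr 1
      · conv_rhs => rw [Finset.sum_range_succ']
        simp only [Nat.succ_ne_zero, Nat.add_sub_cancel, if_false, if_true, reduceIte,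
          map_zero, zero_mul, add_zero, hv]
        refine Finset.sum_congr rfl fun j _ => ?_
        ring
      · conv_rhs => rw [Finset.sum_range_succ]
        simp only [lt_irrefl, if_false, reduceIte, map_zero, mul_zero, zero_mul, add_zero]
        refine Finset.sum_congr rfl fun j hj => ?_
        rw [if_pos (Finset.mem_range.1 hj)]
        simp only [hu]
        ring
    -- Identify `w` with the coefficients of `P 2 (2k+2)`.
    have hw : ∀ i : ℕ, i < k + 2 → (P 2 (2 * k + 2)).coeff (2 * i) = w i := by
      intro i hi
      rw [key 2 h2]
      exact coeff_sum_even' w (k + 2) i hi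
    have heven : ∀ m : ℕ, 1 ≤ m → P m (2 * k + 2) =
        ∑ j ∈ Finset.range (k + 2),
          Polynomial.C ((P 2 (2 * k + 2)).coeff (2 * j)) * Polynomial.X ^ (m * j) := by
      intro m hm
      rw [key m hm]
      exact Finset.sum_congr rfl fun j hj => by rw [hw j (Finset.mem_range.1 hj)]
    -- Odd part.
    set c : ℕ → K := fun j => (P 2 (2 * k + 2)).coeff (2 * j) with hc
    set w' : ℕ → K := fun j => c j - a (2 * k + 1) * (if j < k + 1 then v j else 0) with hw'def
    have key' : ∀ m : ℕ, 1 ≤ m → P m (2 * k + 3) =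
        Polynomial.X * ∑ j ∈ Finset.range (k + 2),
          Polynomial.C (w' j) * Polynomial.X ^ (m * j) := by
      intro m hm
      rw [hPodd m k, heven m hm, (ih m hm).2]
      simp only [hw'def, map_sub, map_mul, sub_mul, Finset.sum_sub_distrib, mul_sub]
      congr 1
      conv_rhs => rw [Finset.sum_range_succ]
      simp only [lt_irrefl, if_false, reduceIte, map_zero, mul_zero, zero_mul, add_zero]
      rw [Finset.mul_sum, Finset.mul_sum, Finset.mul_sum]
      refine Finset.sum_congr rfl fun j hj => ?_
      rw [if_pos (Finset.mem_range.1 hj)]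
      simp only [hv]
      ring
    have hw' : ∀ i : ℕ, i < k + 2 → (P 2 (2 * k + 3)).coeff (2 * i + 1) = w' i := by
      intro i hi
      rw [key' 2 h2, Polynomial.coeff_X_mul]
      exact coeff_sum_even' w' (k + 2) i hi
    have hodd : P m (2 * k + 3) =
        Polynomial.X * ∑ j ∈ Finset.range (k + 2),
          Polynomial.C ((P 2 (2 * k + 3)).coeff (2 * j + 1)) * Polynomial.X ^ (m * j) := by
      rw [key' m hm]
      congr 1
      exact Finset.sum_congr rfl fun j hj => by rw [hw' j (Finset.mem_range.1 hj)]
    constructor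
    · have e1 : 2 * (k + 1) = 2 * k + 2 := by ring
      rw [e1]
      exact heven m hm
    · have e2 : 2 * (k + 1) + 1 = 2 * k + 3 := by ring
      rw [e2]
      exact hodd
end

section
/- Let C_n = \binom{2n}{n}/(n+1) denote the Catalan numbers. Then for all integers k ≥ 0 and 0 ≤ n ≤ k: (i) ∑_{j=0}^{k} (−1)^j \binom{2k−j}{j} C_{k+n−j} equals 0 if n < k and equals 1 if n = k; and (ii) ∑_{j=0}^{k} (−1)^j \binom{2k+1−j}{j} C_{k+n+1−j} equals 0 if n < k and equals 1 if n = k. -/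
open Finset

private def A (k n : ℕ) : ℤ :=
  ∑ j ∈ Finset.range (k + 1),
    (-1 : ℤ) ^ j * Nat.choose (2 * k - j) j * catalan (k + n - j)

private def B (k n : ℕ) : ℤ :=
  ∑ j ∈ Finset.range (k + 1),
    (-1 : ℤ) ^ j * Nat.choose (2 * k + 1 - j) j * catalan (k + n + 1 - j)

private def D (k n : ℕ) : ℤ :=
  (Nat.choose (2 * n) (n + k) : ℤ) - Nat.choose (2 * n) (n + k + 1)

private def E (k n : ℕ) : ℤ :=
  (Nat.choose (2 * n + 1) (n + k + 1) : ℤ) - Nat.choose (2 * n + 1) (n + k + 2)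

private lemma cat_nat (n : ℕ) :
    catalan n + Nat.choose (2 * n) (n + 1) = Nat.choose (2 * n) n := by
  have h1 : (n + 1) * catalan n = Nat.choose (2 * n) n :=
    succ_mul_catalan_eq_centralBinom n
  have h2 : Nat.choose (2 * n) (n + 1) * (n + 1) = Nat.choose (2 * n) n * n := by
    have := Nat.choose_succ_right_eq (2 * n) n
    simpa [two_mul, Nat.add_sub_cancel] using this
  have key : (n + 1) * (catalan n + Nat.choose (2 * n) (n + 1))
      = (n + 1) * Nat.choose (2 * n) n := by
    rw [Nat.mul_add, h1, Nat.mul_comm (n + 1), h2]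
    ring
  exact Nat.eq_of_mul_eq_mul_left (Nat.succ_pos n) key

private lemma cat_nat' (n : ℕ) :
    catalan (n + 1) + Nat.choose (2 * n + 1) (n + 2) = Nat.choose (2 * n + 1) (n + 1) := by
  have h0 := cat_nat (n + 1)
  have e1 : 2 * (n + 1) = (2 * n + 1) + 1 := by ring
  rw [e1] at h0
  have p1 : ((2 * n + 1) + 1).choose ((n + 1) + 1) =
      (2 * n + 1).choose (n + 1) + (2 * n + 1).choose ((n + 1) + 1) :=
    Nat.choose_succ_succ' (2 * n + 1) (n + 1)
  have p2 : ((2 * n + 1) + 1).choose (n + 1) =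
      (2 * n + 1).choose n + (2 * n + 1).choose (n + 1) :=
    Nat.choose_succ_succ' (2 * n + 1) n
  have hsymm := Nat.choose_symm (show n ≤ 2 * n + 1 by omega)
  have e2 : 2 * n + 1 - n = n + 1 := by omega
  rw [e2] at hsymm
  rw [p1, p2] at h0
  have e3 : (n + 1) + 1 = n + 2 := rfl
  rw [e3] at h0
  omega

private lemma Asucc (k n : ℕ) : A (k + 1) n = B k n - A k n := by
  have hA : A (k + 1) n =
      (∑ j ∈ Finset.range (k + 1), (-1 : ℤ) ^ (j + 1) *
        Nat.choose (2 * (k + 1) - (j + 1)) (j + 1) * catalan ((k + 1) + n - (j + 1)))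
      + (-1 : ℤ) ^ 0 * Nat.choose (2 * (k + 1) - 0) 0 * catalan ((k + 1) + n - 0) :=
    Finset.sum_range_succ' _ (k + 1)
  have hB : B k n =
      (∑ j ∈ Finset.range k, (-1 : ℤ) ^ (j + 1) *
        Nat.choose (2 * k + 1 - (j + 1)) (j + 1) * catalan (k + n + 1 - (j + 1)))
      + (-1 : ℤ) ^ 0 * Nat.choose (2 * k + 1 - 0) 0 * catalan (k + n + 1 - 0) :=
    Finset.sum_range_succ' _ k
  -- simplify the peeled sums
  set s : ℤ := ∑ j ∈ Finset.range (k + 1),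
      (-1 : ℤ) ^ j * Nat.choose (2 * k - j) (j + 1) * catalan (k + n - j) with hs
  have hsum : (∑ j ∈ Finset.range (k + 1), (-1 : ℤ) ^ (j + 1) *
        Nat.choose (2 * (k + 1) - (j + 1)) (j + 1) * catalan ((k + 1) + n - (j + 1)))
      = -A k n - s := by
    rw [hs, A, ← Finset.sum_neg_distrib, ← Finset.sum_sub_distrib]
    apply Finset.sum_congr rfl
    intro j hj
    have hjk : j ≤ k := by simpa [Nat.lt_succ_iff] using hj
    have e1 : 2 * (k + 1) - (j + 1) = (2 * k - j) + 1 := by omega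
    have e2 : (k + 1) + n - (j + 1) = k + n - j := by omega
    rw [e1, e2, Nat.choose_succ_succ]
    push_cast
    ring
  have hsum2 : (∑ j ∈ Finset.range k, (-1 : ℤ) ^ (j + 1) *
        Nat.choose (2 * k + 1 - (j + 1)) (j + 1) * catalan (k + n + 1 - (j + 1)))
      = -s := by
    rw [hs, ← Finset.sum_neg_distrib]
    rw [Finset.sum_range_succ]
    have hlast : (-1 : ℤ) ^ k * Nat.choose (2 * k - k) (k + 1) * catalan (k + n - k) = 0 := by
      have : Nat.choose (2 * k - k) (k + 1) = 0 :=
        Nat.choose_eq_zero_of_lt (by omega)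
      rw [this]; push_cast; ring
    rw [hlast, neg_zero, add_zero]
    apply Finset.sum_congr rfl
    intro j hj
    have hjk : j < k := Finset.mem_range.mp hj
    have e1 : 2 * k + 1 - (j + 1) = 2 * k - j := by omega
    have e2 : k + n + 1 - (j + 1) = k + n - j := by omega
    rw [e1, e2]
    ring
  rw [hsum] at hA
  rw [hsum2] at hB
  simp only [pow_zero, Nat.choose_zero_right, Nat.sub_zero, Nat.cast_one, one_mul] at hA hB
  have e3 : (k + 1) + n = k + n + 1 := by omega
  rw [e3] at hA
  rw [hA, hB]
  ring

private lemma Bsucc (k n : ℕ) : B (k + 1) n = A (k + 1) (n + 1) - B k n := by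
  have hB : B (k + 1) n =
      (∑ j ∈ Finset.range (k + 1), (-1 : ℤ) ^ (j + 1) *
        Nat.choose (2 * (k + 1) + 1 - (j + 1)) (j + 1) * catalan ((k + 1) + n + 1 - (j + 1)))
      + (-1 : ℤ) ^ 0 * Nat.choose (2 * (k + 1) + 1 - 0) 0 * catalan ((k + 1) + n + 1 - 0) :=
    Finset.sum_range_succ' _ (k + 1)
  have hA : A (k + 1) (n + 1) =
      (∑ j ∈ Finset.range (k + 1), (-1 : ℤ) ^ (j + 1) *
        Nat.choose (2 * (k + 1) - (j + 1)) (j + 1) * catalan ((k + 1) + (n + 1) - (j + 1)))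
      + (-1 : ℤ) ^ 0 * Nat.choose (2 * (k + 1) - 0) 0 * catalan ((k + 1) + (n + 1) - 0) :=
    Finset.sum_range_succ' _ (k + 1)
  set s : ℤ := ∑ j ∈ Finset.range (k + 1),
      (-1 : ℤ) ^ j * Nat.choose (2 * k + 1 - j) (j + 1) * catalan (k + n + 1 - j) with hs
  have hsum : (∑ j ∈ Finset.range (k + 1), (-1 : ℤ) ^ (j + 1) *
        Nat.choose (2 * (k + 1) + 1 - (j + 1)) (j + 1) * catalan ((k + 1) + n + 1 - (j + 1)))
      = -B k n - s := by
    rw [hs, B, ← Finset.sum_neg_distrib, ← Finset.sum_sub_distrib]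
    apply Finset.sum_congr rfl
    intro j hj
    have hjk : j ≤ k := by simpa [Nat.lt_succ_iff] using hj
    have e1 : 2 * (k + 1) + 1 - (j + 1) = (2 * k + 1 - j) + 1 := by omega
    have e2 : (k + 1) + n + 1 - (j + 1) = k + n + 1 - j := by omega
    rw [e1, e2, Nat.choose_succ_succ]
    push_cast
    ring
  have hsum2 : (∑ j ∈ Finset.range (k + 1), (-1 : ℤ) ^ (j + 1) *
        Nat.choose (2 * (k + 1) - (j + 1)) (j + 1) * catalan ((k + 1) + (n + 1) - (j + 1)))
      = -s := by
    rw [hs, ← Finset.sum_neg_distrib]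
    apply Finset.sum_congr rfl
    intro j hj
    have hjk : j ≤ k := by simpa [Nat.lt_succ_iff] using hj
    have e1 : 2 * (k + 1) - (j + 1) = 2 * k + 1 - j := by omega
    have e2 : (k + 1) + (n + 1) - (j + 1) = k + n + 1 - j := by omega
    rw [e1, e2]
    ring
  rw [hsum] at hB
  rw [hsum2] at hA
  simp only [pow_zero, Nat.choose_zero_right, Nat.sub_zero, Nat.cast_one, one_mul] at hA hB
  have e3 : (k + 1) + n + 1 = (k + 1) + (n + 1) := by omega
  rw [e3] at hB
  rw [hA, hB]
  ring

private lemma DE1 (k n : ℕ) : D (k + 1) n = E k n - D k n := by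
  simp only [D, E]
  have h1 : Nat.choose (2 * n + 1) (n + k + 1) =
      Nat.choose (2 * n) (n + k) + Nat.choose (2 * n) (n + k + 1) :=
    Nat.choose_succ_succ _ _
  have h2 : Nat.choose (2 * n + 1) (n + k + 2) =
      Nat.choose (2 * n) (n + k + 1) + Nat.choose (2 * n) (n + k + 2) :=
    Nat.choose_succ_succ _ _
  have e1 : n + (k + 1) = n + k + 1 := by omega
  rw [e1, show n + k + 1 + 1 = n + k + 2 from rfl, h1, h2]
  push_cast
  ring

private lemma DE2 (k n : ℕ) : E (k + 1) n = D (k + 1) (n + 1) - E k n := by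
  simp only [D, E]
  have h1 : Nat.choose (2 * (n + 1)) ((n + 1) + (k + 1)) =
      Nat.choose (2 * n + 1) (n + k + 1) + Nat.choose (2 * n + 1) (n + k + 2) := by
    have e : 2 * (n + 1) = (2 * n + 1) + 1 := by ring
    have e' : (n + 1) + (k + 1) = (n + k + 1) + 1 := by omega
    rw [e, e', Nat.choose_succ_succ]
  have h2 : Nat.choose (2 * (n + 1)) ((n + 1) + (k + 1) + 1) =
      Nat.choose (2 * n + 1) (n + k + 2) + Nat.choose (2 * n + 1) (n + k + 3) := by
    have e : 2 * (n + 1) = (2 * n + 1) + 1 := by ring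
    have e' : (n + 1) + (k + 1) + 1 = (n + k + 2) + 1 := by omega
    rw [e, e', Nat.choose_succ_succ]
  rw [h1, h2, show n + (k + 1) + 1 = n + k + 2 by omega,
    show n + (k + 1) + 2 = n + k + 3 by omega]
  push_cast
  ring

private lemma AD : ∀ k n : ℕ, A k n = D k n ∧ B k n = E k n := by
  intro k
  induction k with
  | zero =>
    intro n
    constructor
    · have hA0 : A 0 n = catalan n := by simp [A]
      have := cat_nat n
      simp only [D, Nat.add_zero]
      rw [hA0]
      push_cast [← this]
      ring
    · have hB0 : B 0 n = catalan (n + 1) := by simp [B]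
      have := cat_nat' n
      simp only [E, Nat.add_zero]
      rw [hB0]
      have e1 : n + 0 + 1 = n + 1 := by omega
      have e2 : n + 0 + 2 = n + 2 := by omega
      rw [e1, e2]
      push_cast [← this]
      ring
  | succ k ih =>
    have hA : ∀ n, A (k + 1) n = D (k + 1) n := by
      intro n
      rw [Asucc, (ih n).1, (ih n).2, ← DE1]
    intro n
    refine ⟨hA n, ?_⟩
    rw [Bsucc, hA (n + 1), (ih n).2, ← DE2]

/-- Orthogonality relations for Catalan numbers and Fibonacci polynomials:
`Σ_{j=0}^k (−1)^j C(2k−j, j) Cat_{k+n−j} = [n = k]` and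
`Σ_{j=0}^k (−1)^j C(2k+1−j, j) Cat_{k+n+1−j} = [n = k]` for `0 ≤ n ≤ k`. -/
theorem catalan_fibonacci_orthogonality : ∀ k n : ℕ, n ≤ k →
    ((∑ j ∈ Finset.range (k + 1),
        (-1 : ℤ) ^ j * Nat.choose (2 * k - j) j * catalan (k + n - j)) =
      if n = k then 1 else 0) ∧
    ((∑ j ∈ Finset.range (k + 1),
        (-1 : ℤ) ^ j * Nat.choose (2 * k + 1 - j) j * catalan (k + n + 1 - j)) =
      if n = k then 1 else 0) := by
  intro k n hnk
  have h := AD k n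
  have hA : A k n = (if n = k then 1 else 0) := by
    rw [h.1, D]
    by_cases hnk' : n = k
    · subst hnk'
      have e1 : n + n = 2 * n := by ring
      rw [e1, Nat.choose_self, Nat.choose_eq_zero_of_lt (by omega)]
      simp
    · have hlt : n < k := lt_of_le_of_ne hnk hnk'
      rw [Nat.choose_eq_zero_of_lt (by omega), Nat.choose_eq_zero_of_lt (by omega)]
      simp [hnk']
  have hB : B k n = (if n = k then 1 else 0) := by
    rw [h.2, E]
    by_cases hnk' : n = k
    · subst hnk'
      have e1 : n + n + 1 = 2 * n + 1 := by ring
      rw [e1, Nat.choose_self, Nat.choose_eq_zero_of_lt (by omega)]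
      simp
    · have hlt : n < k := lt_of_le_of_ne hnk hnk'
      rw [Nat.choose_eq_zero_of_lt (by omega), Nat.choose_eq_zero_of_lt (by omega)]
      simp [hnk']
  exact ⟨hA, hB⟩
end

section
/- In the polynomial ring ℤ[q], for every n ≥ 0 the Hankel determinant of the sequence f_k = q^{\binom{k+1}{2}} satisfies det(q^{\binom{i+j+1}{2}})_{i,j=0}^{n} = q^{n(n+1)²/2} · ∏_{j=1}^{n} (q^j − 1)^{n+1−j}. -/
open Polynomial Matrix Finset

private lemma choose_split (a b : ℕ) :
    (a + b + 1).choose 2 = a * (a + 1) / 2 + (b * (b + 1) / 2 + a * b) := by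
  have h2 : ∀ m : ℕ, 2 * (m * (m + 1) / 2) = m * (m + 1) := fun m =>
    Nat.mul_div_cancel' (Nat.even_mul_succ_self m).two_dvd
  have hc : (a + b + 1).choose 2 = (a + b) * (a + b + 1) / 2 := by
    rw [Nat.choose_two_right, Nat.add_sub_cancel, Nat.mul_comm]
  apply Nat.eq_of_mul_eq_mul_left (show 0 < 2 by norm_num)
  rw [hc, h2]
  calc (a + b) * (a + b + 1) = a * (a + 1) + b * (b + 1) + 2 * (a * b) := by ring
    _ = 2 * (a * (a + 1) / 2) + 2 * (b * (b + 1) / 2) + 2 * (a * b) := by rw [h2, h2]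
    _ = 2 * (a * (a + 1) / 2 + (b * (b + 1) / 2 + a * b)) := by ring

private lemma inner_reindex (n : ℕ) (i : Fin (n + 1)) :
    (∏ j ∈ Finset.Ioi i, ((X : Polynomial ℤ) ^ ((j : ℕ) - (i : ℕ)) - 1)) =
      ∏ d ∈ Finset.Icc 1 (n - (i : ℕ)), ((X : Polynomial ℤ) ^ d - 1) := by
  have h1 : (∏ j ∈ Finset.Ioi i, ((X : Polynomial ℤ) ^ ((j : ℕ) - (i : ℕ)) - 1))
      = ∏ j ∈ Finset.Ioc (i : ℕ) (n + 1 - 1), ((X : Polynomial ℤ) ^ (j - (i : ℕ)) - 1) := by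
    rw [show Finset.Ioc (i : ℕ) (n + 1 - 1) = Finset.Ioo (i : ℕ) (n + 1) by ext; simp only [Finset.mem_Ioc, Finset.mem_Ioo]; omega,
      ← Fin.map_valEmbedding_Ioi, Finset.prod_map]
    rfl
  rw [h1]
  refine Finset.prod_nbij' (fun j => j - (i : ℕ)) (fun d => (i : ℕ) + d) ?_ ?_ ?_ ?_ ?_ <;>
    simp only [Finset.mem_Ioc, Finset.mem_Icc] <;> intros <;> first | omega | trivial

/-- Hankel determinant of Eisenstein's sequence `q^{C(k+1,2)}` in `ℤ[q]`:
`det(q^{C(i+j+1,2)})_{i,j=0}^n = q^{n(n+1)²/2} ∏_{j=1}^n (q^j − 1)^{n+1−j}`. -/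
theorem hankel_det_eisenstein : ∀ n : ℕ,
    Matrix.det (Matrix.of fun i j : Fin (n + 1) =>
        (Polynomial.X : Polynomial ℤ) ^ Nat.choose ((i : ℕ) + (j : ℕ) + 1) 2) =
      Polynomial.X ^ (n * (n + 1) ^ 2 / 2) *
        ∏ j ∈ Finset.Icc 1 n,
          ((Polynomial.X : Polynomial ℤ) ^ j - 1) ^ (n + 1 - j) := by
  intro n
  set u : Fin (n + 1) → Polynomial ℤ := fun i => X ^ ((i : ℕ) * ((i : ℕ) + 1) / 2) with hu
  set V : Matrix (Fin (n + 1)) (Fin (n + 1)) (Polynomial ℤ) :=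
    Matrix.vandermonde (fun k : Fin (n + 1) => (X : Polynomial ℤ) ^ (k : ℕ)) with hV
  set B : Matrix (Fin (n + 1)) (Fin (n + 1)) (Polynomial ℤ) :=
    Matrix.of fun i j => u j * V i j with hB
  have hM : (Matrix.of fun i j : Fin (n + 1) =>
      (Polynomial.X : Polynomial ℤ) ^ Nat.choose ((i : ℕ) + (j : ℕ) + 1) 2) =
      Matrix.of fun i j => u i * B i j := by
    ext i j
    simp only [Matrix.of_apply, hB, hu, hV, Matrix.vandermonde_apply, ← pow_mul, ← pow_add]
    rw [choose_split]
  rw [hM, Matrix.det_mul_column, hB, Matrix.det_mul_row, Matrix.det_vandermonde]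
  -- rewrite the vandermonde double product
  have hfac : ∀ i : Fin (n + 1), ∀ j ∈ Finset.Ioi i,
      ((X : Polynomial ℤ) ^ (j : ℕ) - X ^ (i : ℕ)) =
        X ^ (i : ℕ) * (X ^ ((j : ℕ) - (i : ℕ)) - 1) := by
    intro i j hj
    rw [Finset.mem_Ioi] at hj
    rw [mul_sub, mul_one, ← pow_add]
    congr 2
    omega
  have hvd : (∏ i : Fin (n + 1), ∏ j ∈ Finset.Ioi i,
      ((X : Polynomial ℤ) ^ (j : ℕ) - X ^ (i : ℕ))) =
      X ^ (∑ i ∈ Finset.range (n + 1), i * (n - i)) *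
        ∏ d ∈ Finset.Icc 1 n, ((X : Polynomial ℤ) ^ d - 1) ^ (n + 1 - d) := by
    calc (∏ i : Fin (n + 1), ∏ j ∈ Finset.Ioi i,
          ((X : Polynomial ℤ) ^ (j : ℕ) - X ^ (i : ℕ)))
        = ∏ i : Fin (n + 1), ((X : Polynomial ℤ) ^ ((i : ℕ) * (n - (i : ℕ))) *
            ∏ d ∈ Finset.Icc 1 (n - (i : ℕ)), ((X : Polynomial ℤ) ^ d - 1)) := by
          refine Finset.prod_congr rfl fun i _ => ?_
          rw [Finset.prod_congr rfl (hfac i), Finset.prod_mul_distrib,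
            Finset.prod_const, inner_reindex, ← pow_mul]
          congr 2
          rw [Fin.card_Ioi, Nat.add_sub_cancel]
      _ = (∏ i : Fin (n + 1), (X : Polynomial ℤ) ^ ((i : ℕ) * (n - (i : ℕ)))) *
            ∏ i : Fin (n + 1), ∏ d ∈ Finset.Icc 1 (n - (i : ℕ)),
              ((X : Polynomial ℤ) ^ d - 1) := Finset.prod_mul_distrib
      _ = X ^ (∑ i ∈ Finset.range (n + 1), i * (n - i)) *
            ∏ d ∈ Finset.Icc 1 n, ((X : Polynomial ℤ) ^ d - 1) ^ (n + 1 - d) := by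
          congr 1
          · rw [Finset.prod_pow_eq_pow_sum, Fin.sum_univ_eq_sum_range (fun i => i * (n - i))]
          · rw [Fin.prod_univ_eq_prod_range
              (fun i => ∏ d ∈ Finset.Icc 1 (n - i), ((X : Polynomial ℤ) ^ d - 1))]
            rw [Finset.prod_comm' (t' := Finset.Icc 1 n)
              (s' := fun d => Finset.range (n + 1 - d))
              (fun x y => by simp only [Finset.mem_range, Finset.mem_Icc]; omega)]
            exact Finset.prod_congr rfl fun d _ => by
              rw [Finset.prod_const, Finset.card_range]
  rw [hvd, hu, Finset.prod_pow_eq_pow_sum,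
    Fin.sum_univ_eq_sum_range (fun i => i * (i + 1) / 2)]
  rw [← mul_assoc, ← mul_assoc, ← pow_add, ← pow_add]
  congr 2
  -- exponent arithmetic
  rw [← Finset.sum_add_distrib, ← Finset.sum_add_distrib]
  have hterm : ∀ i ∈ Finset.range (n + 1),
      i * (i + 1) / 2 + i * (i + 1) / 2 + i * (n - i) = i * (n + 1) := by
    intro i hi
    rw [Finset.mem_range] at hi
    have h2 : 2 * (i * (i + 1) / 2) = i * (i + 1) :=
      Nat.mul_div_cancel' (Nat.even_mul_succ_self i).two_dvd
    have : i * (i + 1) + i * (n - i) = i * (n + 1) := by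
      rw [← Nat.mul_add]
      congr 1
      omega
    omega
  rw [Finset.sum_congr rfl hterm, ← Finset.sum_mul]
  have ht : (∑ i ∈ Finset.range (n + 1), i) * 2 = (n + 1) * n :=
    Finset.sum_range_id_mul_two (n + 1)
  have : n * (n + 1) ^ 2 = 2 * ((∑ i ∈ Finset.range (n + 1), i) * (n + 1)) := by
    calc n * (n + 1) ^ 2 = ((n + 1) * n) * (n + 1) := by ring
      _ = ((∑ i ∈ Finset.range (n + 1), i) * 2) * (n + 1) := by rw [ht]
      _ = 2 * ((∑ i ∈ Finset.range (n + 1), i) * (n + 1)) := by ring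
  rw [this, Nat.mul_div_cancel_left _ (by norm_num : 0 < 2)]
end
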